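/- Let u, v be nonzero vectors in a complex inner product space, and define w_a = v_a/u_a coordinatewise (assuming all u_a ≠ 0) in ℂ^S. Then the Fubini–Study norm of v at u, defined as ‖P_{u^⊥}(v)‖/‖u‖ where P_{u^⊥} is the orthogonal projection onto u^⊥, satisfies ‖v‖_u² = (1/2) · (Σ_{a,b} |u_a|²|u_b|² |w_a − w_b|²) / (Σ_{a,b} |u_a|²|u_b|²), and in particular ‖v‖_u ≤ max_a |w_a|. -/

import Mathlib

/-- Fubini–Study norm in coordinates.  Let `u, v ∈ ℂ^S` be nonzero with all
coordinates of `u` nonzero, and set `w a = v a / u a`.  The Fubini–Study norm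
`‖v‖_u = ‖P_{u^⊥}(v)‖ / ‖u‖`, where `P_{u^⊥}(v) = v - (⟨v,u⟩/‖u‖²) u`, satisfies
`‖v‖_u² = ½ (∑_{a,b} |u a|²|u b|² |w a - w b|²) / (∑_{a,b} |u a|²|u b|²)`,
and in particular `‖v‖_u ≤ max_a |w a|`. -/
theorem stmt5 (S : ℕ) (hS : 0 < S) (u v : EuclideanSpace ℂ (Fin S))
    (hu : ∀ a, u a ≠ 0) (hune : u ≠ 0) (hv : v ≠ 0) :
    (‖v - ((inner ℂ u v : ℂ) / (‖u‖ : ℂ) ^ 2) • u‖ / ‖u‖) ^ 2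
      = (1 / 2) * (∑ a, ∑ b, ‖u a‖ ^ 2 * ‖u b‖ ^ 2 * ‖v a / u a - v b / u b‖ ^ 2)
          / (∑ a, ∑ b, ‖u a‖ ^ 2 * ‖u b‖ ^ 2)
    ∧ ‖v - ((inner ℂ u v : ℂ) / (‖u‖ : ℂ) ^ 2) • u‖ / ‖u‖
        ≤ Finset.univ.sup' (Finset.univ_nonempty_iff.mpr ⟨⟨0, hS⟩⟩)
            (fun a => ‖v a / u a‖) := by
  have hA : (0:ℝ) < ‖u‖ := norm_pos_iff.mpr hune
  set C : ℂ := inner ℂ u v with hC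
  have hA2 : ‖u‖^2 = ∑ a, ‖u a‖^2 := PiLp.norm_sq_eq_of_L2 _ u
  have hB2 : ‖v‖^2 = ∑ a, ‖v a‖^2 := PiLp.norm_sq_eq_of_L2 _ v
  -- key1 : squared norm of the projection
  have h1 : RCLike.re (inner ℂ v ((C / (‖u‖:ℂ)^2) • u) : ℂ) = ‖C‖^2 / ‖u‖^2 := by
    rw [inner_smul_right]
    have hvu : (inner ℂ v u : ℂ) = (starRingEnd ℂ) C := by rw [hC, ← inner_conj_symm]
    rw [hvu]
    have : C / (‖u‖:ℂ)^2 * (starRingEnd ℂ) C = (((‖C‖^2 / ‖u‖^2 : ℝ)) : ℂ) := by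
      rw [div_mul_eq_mul_div, Complex.mul_conj, Complex.normSq_eq_norm_sq]
      push_cast
      ring
    rw [this]
    exact Complex.ofReal_re _
  have h2 : ‖(C / (‖u‖:ℂ)^2) • u‖^2 = ‖C‖^2 / ‖u‖^2 := by
    rw [norm_smul, norm_div, norm_pow, Complex.norm_real]
    rw [Real.norm_eq_abs, abs_of_pos hA]
    field_simp
  have key1 : ‖v - (C / (‖u‖:ℂ)^2) • u‖^2 = ‖v‖^2 - ‖C‖^2 / ‖u‖^2 := by
    rw [norm_sub_sq (𝕜 := ℂ), h1, h2]; ring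
  -- key3 : the denominator
  have key3 : (∑ a, ∑ b, ‖u a‖^2 * ‖u b‖^2) = (‖u‖^2) * (‖u‖^2) := by
    rw [← Finset.sum_mul_sum, ← hA2]
  -- inner product in coordinates
  have hCsum : C = ∑ a, (starRingEnd ℂ) (u a) * v a := by
    rw [hC, PiLp.inner_apply]; exact Finset.sum_congr rfl fun a _ => by rw [RCLike.inner_apply]; ring
  -- key2 : the numerator
  have key2 : (∑ a, ∑ b, ‖u a‖^2 * ‖u b‖^2 * ‖v a / u a - v b / u b‖^2)
      = 2 * (‖v‖^2 * ‖u‖^2 - ‖C‖^2) := by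
    have term : ∀ a b : Fin S, ‖u a‖^2 * ‖u b‖^2 * ‖v a / u a - v b / u b‖^2
        = ‖v a‖^2 * ‖u b‖^2 + ‖v b‖^2 * ‖u a‖^2
          - 2 * ((v a * u b) * (starRingEnd ℂ) (v b * u a)).re := by
      intro a b
      have e1 : ‖u a‖^2 * ‖u b‖^2 * ‖v a / u a - v b / u b‖^2
          = ‖v a * u b - v b * u a‖^2 := by
        rw [← mul_pow, ← mul_pow, ← norm_mul, ← norm_mul]
        congr 2
        field_simp [hu a, hu b]
      rw [e1, Complex.sq_norm, Complex.normSq_sub, Complex.normSq_mul,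
        Complex.normSq_mul, ← Complex.sq_norm (v a), ← Complex.sq_norm (u b),
        ← Complex.sq_norm (v b), ← Complex.sq_norm (u a)]
    simp_rw [term]
    have s1 : (∑ a, ∑ b, (‖v a‖^2 * ‖u b‖^2)) = ‖v‖^2 * ‖u‖^2 := by
      rw [← Finset.sum_mul_sum, ← hA2, ← hB2]
    have s2 : (∑ a, ∑ b, (‖v b‖^2 * ‖u a‖^2)) = ‖v‖^2 * ‖u‖^2 := by
      rw [Finset.sum_comm]
      simp_rw [← Finset.sum_mul_sum]
      rw [← hA2, ← hB2]
    have s3 : (∑ a, ∑ b, ((v a * u b) * (starRingEnd ℂ) (v b * u a)).re) = ‖C‖^2 := by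
      have hz : (∑ a, ∑ b, (v a * u b) * (starRingEnd ℂ) (v b * u a))
          = (∑ a, v a * (starRingEnd ℂ) (u a)) * (∑ b, u b * (starRingEnd ℂ) (v b)) := by
        rw [Finset.sum_mul_sum]
        apply Finset.sum_congr rfl; intro a _
        apply Finset.sum_congr rfl; intro b _
        rw [map_mul]
        ring
      have : (∑ a, ∑ b, ((v a * u b) * (starRingEnd ℂ) (v b * u a)).re)
          = ((∑ a, v a * (starRingEnd ℂ) (u a)) * (∑ b, u b * (starRingEnd ℂ) (v b))).re := by
        rw [← hz, Complex.re_sum]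
        apply Finset.sum_congr rfl; intro a _
        rw [Complex.re_sum]
      rw [this]
      have e1 : (∑ a, v a * (starRingEnd ℂ) (u a)) = C := by
        rw [hCsum]; apply Finset.sum_congr rfl; intros; ring
      have e2 : (∑ b, u b * (starRingEnd ℂ) (v b)) = (starRingEnd ℂ) C := by
        rw [hCsum, map_sum]
        apply Finset.sum_congr rfl; intros; rw [map_mul, Complex.conj_conj]
      rw [e1, e2, Complex.mul_conj, Complex.ofReal_re, Complex.normSq_eq_norm_sq]
    have split : ∀ (f g h : Fin S → Fin S → ℝ),
        (∑ a, ∑ b, (f a b + g a b - 2 * h a b))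
          = (∑ a, ∑ b, f a b) + (∑ a, ∑ b, g a b) - 2 * (∑ a, ∑ b, h a b) := by
      intro f g h
      rw [Finset.mul_sum]
      rw [← Finset.sum_add_distrib, ← Finset.sum_sub_distrib]
      apply Finset.sum_congr rfl; intro a _
      rw [Finset.mul_sum, ← Finset.sum_add_distrib, ← Finset.sum_sub_distrib]
    rw [split (fun a b => ‖v a‖^2 * ‖u b‖^2) (fun a b => ‖v b‖^2 * ‖u a‖^2)
      (fun a b => ((v a * u b) * (starRingEnd ℂ) (v b * u a)).re), s1, s2, s3]
    ring
  constructor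
  · rw [div_pow, key1, key2, key3]
    field_simp
  · set M := Finset.univ.sup' (Finset.univ_nonempty_iff.mpr ⟨⟨0, hS⟩⟩) (fun a => ‖v a / u a‖) with hM
    have hMle : ∀ a, ‖v a / u a‖ ≤ M := by
      intro a; rw [hM]; exact Finset.le_sup' (fun a => ‖v a / u a‖) (Finset.mem_univ a)
    have hM0 : 0 ≤ M := le_trans (norm_nonneg _) (hMle ⟨0, hS⟩)
    have hvM : ‖v‖ ≤ M * ‖u‖ := by
      have hsq : ‖v‖^2 ≤ (M * ‖u‖)^2 := by
        rw [hB2, mul_pow, hA2, Finset.mul_sum]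
        apply Finset.sum_le_sum
        intro a _
        have : ‖v a‖ = ‖v a / u a‖ * ‖u a‖ := by
          rw [← norm_mul, div_mul_cancel₀ _ (hu a)]
        rw [this, mul_pow]
        exact mul_le_mul_of_nonneg_right
          (pow_le_pow_left₀ (norm_nonneg _) (hMle a) 2) (by positivity)
      exact (pow_le_pow_iff_left₀ (norm_nonneg v) (by positivity) two_ne_zero).mp hsq
    have hPv : ‖v - (C / (‖u‖:ℂ)^2) • u‖ ≤ ‖v‖ := by
      have hsq : ‖v - (C / (‖u‖:ℂ)^2) • u‖^2 ≤ ‖v‖^2 := by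
        rw [key1]
        have : 0 ≤ ‖C‖^2 / ‖u‖^2 := by positivity
        linarith
      exact (pow_le_pow_iff_left₀ (norm_nonneg _) (norm_nonneg v) two_ne_zero).mp hsq
    rw [div_le_iff₀ hA]
    exact le_trans hPv hvM
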